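/- Let n be a positive integer with 2 ≤ ω(n) ≤ 12. Then for every integer x, among the ω(n)² consecutive integers x + 1, x + 2, …, x + ω(n)² there is at least one integer coprime to n. (Equivalently, the Jacobsthal function satisfies g(n) ≤ ω(n)² whenever 2 ≤ ω(n) ≤ 12.) -/

import Mathlib

open Finset

/-- primes that are at least `c` -/
def sge (c : ℕ) : ℕ → Prop := fun p => p.Prime ∧ c ≤ p

instance (c : ℕ) : DecidablePred (sge c) := fun _ => instDecidableAnd

lemma sge_infinite (c : ℕ) : (setOf (sge c)).Infinite := by
  have h := Nat.infinite_setOf_prime.diff (Set.finite_Iio c)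
  apply h.mono
  intro p hp
  exact ⟨hp.1, not_lt.1 hp.2⟩

/-- domination by smallest elements -/
lemma sum_le_sum_nth (f : ℕ → ℕ) (s : ℕ → Prop) [DecidablePred s]
    (hs : (setOf s).Infinite) (hpos : ∀ p, s p → 0 < p)
    (hf : ∀ a b, 0 < a → a ≤ b → f b ≤ f a) :
    ∀ (m : ℕ) (S : Finset ℕ), S.card = m → (∀ p ∈ S, s p) →
      ∑ p ∈ S, f p ≤ ∑ i ∈ range m, f (Nat.nth s i) := by
  intro m
  induction m with
  | zero => intro S hS _; rw [Finset.card_eq_zero.mp hS]; simp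
  | succ m ih =>
    intro S hS hmem
    have hne : S.Nonempty := Finset.card_pos.mp (by omega)
    set M := S.max' hne with hM
    have hMS : M ∈ S := S.max'_mem hne
    have hsub : S.erase M ⊆ (range M).filter (fun x => s x) := by
      intro y hy
      rw [Finset.mem_erase] at hy
      rw [Finset.mem_filter, Finset.mem_range]
      exact ⟨lt_of_le_of_ne (S.le_max' y hy.2) hy.1, hmem y hy.2⟩
    have hcount : m ≤ Nat.count s M := by
      rw [Nat.count_eq_card_filter_range]
      have := Finset.card_le_card hsub
      rw [Finset.card_erase_of_mem hMS, hS] at this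
      omega
    have hnthM : Nat.nth s m ≤ M := by
      calc Nat.nth s m ≤ Nat.nth s (Nat.count s M) := (Nat.nth_le_nth hs).mpr hcount
        _ = M := Nat.nth_count (hmem M hMS)
    rw [← Finset.add_sum_erase S f hMS, Finset.sum_range_succ]
    have h1 := ih (S.erase M) (by rw [Finset.card_erase_of_mem hMS, hS]; omega) 
      (fun p hp => hmem p (Finset.mem_of_mem_erase hp))
    have h2 := hf _ _ (hpos _ (Nat.nth_mem_of_infinite hs m)) hnthM
    omega

/-- divisibility as a residue condition -/
lemma dvd_iff_mod (p : ℕ) (hp : 0 < p) (y : ℤ) (j : ℕ) :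
    (p:ℤ) ∣ (y + j) ↔ j % p = ((-y) % (p:ℤ)).toNat := by
  have hp' : (p:ℤ) ≠ 0 := by exact_mod_cast hp.ne'
  have h0 : 0 ≤ (-y) % (p:ℤ) := Int.emod_nonneg _ hp'
  have h1 : (p:ℤ) ∣ (y + j) ↔ (-y) % (p:ℤ) = (j:ℤ) % (p:ℤ) := by
    rw [← Int.ModEq]
    rw [Int.modEq_iff_dvd]
    constructor <;> intro h <;> [ (have := h); (have := h) ] <;>
      · obtain ⟨c, hc⟩ := this; exact ⟨c, by linarith⟩
  rw [h1]
  have h2 : ((j % p : ℕ) : ℤ) = (j:ℤ) % (p:ℤ) := by push_cast; rfl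
  constructor
  · intro h
    have : ((j % p : ℕ) : ℤ) = (-y) % (p:ℤ) := by rw [h2, h]
    omega
  · intro h
    rw [← h2, h, Int.toNat_of_nonneg h0]

/-- upper bound on a double congruence class in a window -/
lemma count_pair (L d p a b : ℕ) (hd : 0 < d) (hp : 0 < p) (hco : Nat.Coprime d p) :
    ((range L).filter (fun j => j % d = a ∧ j % p = b)).card ≤ (L-1)/(d*p) + 1 := by
  have hdp : 0 < d * p := Nat.mul_pos hd hp
  have : ((range L).filter (fun j => j % d = a ∧ j % p = b)).card
      ≤ (range ((L-1)/(d*p) + 1)).card := by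
    apply Finset.card_le_card_of_injOn (fun j => j / (d*p))
    · intro j hj
      rw [Finset.mem_coe, Finset.mem_filter, Finset.mem_range] at hj
      simp only [Finset.mem_coe, Finset.mem_range]
      have : j ≤ L - 1 := by omega
      have := Nat.div_le_div_right (c := d*p) this
      omega
    · intro j hj j' hj' hq
      simp only [Finset.coe_filter, Set.mem_setOf_eq, Finset.mem_range] at hj hj'
      have hdd : (d:ℤ) ∣ (j':ℤ) - (j:ℤ) := by
        have : (j:ℤ) % d = (j':ℤ) % d := by
          have := hj.2.1; have := hj'.2.1
          push_cast [← this]; omega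
        exact Int.ModEq.dvd this
      have hpp : (p:ℤ) ∣ (j':ℤ) - (j:ℤ) := by
        have : (j:ℤ) % p = (j':ℤ) % p := by
          have := hj.2.2; have := hj'.2.2
          push_cast [← this]; omega
        exact Int.ModEq.dvd this
      have hco' : IsCoprime (d:ℤ) (p:ℤ) := Nat.isCoprime_iff_coprime.mpr hco
      have hdvd : ((d*p : ℕ):ℤ) ∣ (j':ℤ) - (j:ℤ) := by
        push_cast
        exact hco'.mul_dvd hdd hpp
      have habs : |(j':ℤ) - (j:ℤ)| < ((d*p:ℕ):ℤ) := by
        have hq' : j / (d*p) = j' / (d*p) := hq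
        have e1 : j = d*p*(j'/(d*p)) + j % (d*p) := by rw [← hq']; exact ((Nat.div_add_mod j (d*p)).symm ▸ rfl)
        have e2 : j' = d*p*(j'/(d*p)) + j' % (d*p) := (Nat.div_add_mod j' (d*p)).symm ▸ rfl
        have m1 : j % (d*p) < d*p := Nat.mod_lt _ hdp
        have m2 : j' % (d*p) < d*p := Nat.mod_lt _ hdp
        rw [abs_lt]
        constructor <;> push_cast <;> omega
      have := Int.eq_zero_of_abs_lt_dvd hdvd habs
      omega
  simpa using this

/-- lower bound on a single congruence class in a window -/
lemma count_class_ge (L d a : ℕ) (hd : 0 < d) (ha : a < d) :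
    L / d ≤ ((range L).filter (fun j => j % d = a)).card := by
  have : (range (L/d)).card ≤ ((range L).filter (fun j => j % d = a)).card := by
    apply Finset.card_le_card_of_injOn (fun i => a + i * d)
    · intro i hi
      rw [Finset.mem_coe, Finset.mem_range] at hi
      rw [Finset.mem_coe, Finset.mem_filter, Finset.mem_range]
      constructor
      · have : (i+1) * d ≤ (L/d) * d := Nat.mul_le_mul_right d hi
        have := Nat.div_mul_le_self L d
        nlinarith
      · rw [Nat.add_mul_mod_self_right, Nat.mod_eq_of_lt ha]
    · intro i _ i' _ h
      simp only at h
      have := Nat.eq_of_mul_eq_mul_right hd (by omega : i * d = i' * d)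
      omega
  simpa using this

/-- if a prime divisor of `d` divides the value, the residue is not good -/
lemma not_good_of_dvd (d q : ℕ) (hd : 0 < d) (x : ℤ) (j : ℕ) (hqd : q ∣ d) (hq : 2 ≤ q)
    (hdvd : (q:ℤ) ∣ (x + 1 + j)) :
    ¬ Nat.Coprime ((j + ((x+1) % (d:ℤ)).toNat) % d) d := by
  intro hcop
  set s : ℕ := ((x+1) % (d:ℤ)).toNat with hs
  have hd' : (d:ℤ) ≠ 0 := by exact_mod_cast hd.ne'
  have h0 : 0 ≤ (x+1) % (d:ℤ) := Int.emod_nonneg _ hd'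
  have hsz : ((s:ℕ):ℤ) = (x+1) % (d:ℤ) := Int.toNat_of_nonneg h0
  have hdq : (d:ℤ) ∣ (x+1) - s := by
    rw [hsz, Int.emod_def]; exact ⟨(x+1)/d, by ring⟩
  have hqz : (q:ℤ) ∣ (x+1) - s := dvd_trans (by exact_mod_cast hqd) hdq
  have hqjs : (q:ℤ) ∣ ((j:ℤ) + s) := by
    have : (x + 1 + j) - ((x+1) - s) = (j:ℤ) + s := by ring
    exact this ▸ dvd_sub hdvd hqz
  have hqn : q ∣ j + s := by
    have : ((j + s : ℕ):ℤ) = (j:ℤ) + s := by push_cast; ring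
    exact_mod_cast this ▸ hqjs
  have hqmod : q ∣ (j + s) % d := (Nat.dvd_mod_iff hqd).mpr hqn
  have : q ∣ Nat.gcd ((j + s) % d) d := Nat.dvd_gcd hqmod hqd
  rw [hcop] at this
  have := Nat.dvd_one.mp this
  omega

/-- the number of good residues is invariant under shift -/
lemma card_good (d u : ℕ) (hd : 0 < d) (t : ℕ)
    (H : ∀ v < d, ((range d).filter (fun a => Nat.Coprime ((a + v) % d) d)).card = t) :
    ((range d).filter (fun a => Nat.Coprime ((a + u) % d) d)).card = t := by
  have key : ∀ a : ℕ, (a + u) % d = (a + u % d) % d := by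
    intro a
    conv_lhs => rw [Nat.add_mod]
    conv_rhs => rw [Nat.add_mod, Nat.mod_mod_of_dvd u dvd_rfl]
  simp only [key]
  exact H (u % d) (Nat.mod_lt _ hd)

/-- master sieve lemma -/
lemma sieve (L d t : ℕ) (hd : 0 < d) (x : ℤ) (P' : Finset ℕ)
    (hprime : ∀ p ∈ P', p.Prime ∧ ¬ p ∣ d)
    (Hgood : ∀ v < d, ((range d).filter (fun a => Nat.Coprime ((a + v) % d) d)).card = t)
    (hcov : ∀ j ∈ range L, Nat.Coprime ((j + ((x+1) % (d:ℤ)).toNat) % d) d →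
       ∃ p ∈ P', (p:ℤ) ∣ (x + 1 + j)) :
    t * (L / d) ≤ ∑ p ∈ P', t * ((L-1)/(d*p) + 1) := by
  set s : ℕ := ((x+1) % (d:ℤ)).toNat with hs
  set A : Finset ℕ := (range d).filter (fun a => Nat.Coprime ((a + s) % d) d) with hA
  have hAcard : A.card = t := card_good d s hd t Hgood
  have per : ∀ j : ℕ, (j + s) % d = (j % d + s) % d := by
    intro j
    conv_lhs => rw [Nat.add_mod]
    conv_rhs => rw [Nat.add_mod, Nat.mod_mod_of_dvd j dvd_rfl]
  have low : t * (L / d) ≤ ((range L).filter (fun j => Nat.Coprime ((j + s) % d) d)).card := by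
    have hsub : A.biUnion (fun a => (range L).filter (fun j => j % d = a)) ⊆
        (range L).filter (fun j => Nat.Coprime ((j + s) % d) d) := by
      intro j hj
      rw [Finset.mem_biUnion] at hj
      obtain ⟨a, haA, hj⟩ := hj
      rw [Finset.mem_filter] at hj ⊢
      refine ⟨hj.1, ?_⟩
      rw [per j, hj.2]
      rw [hA, Finset.mem_filter] at haA
      exact haA.2
    have hcards : ∑ _a ∈ A, L / d ≤ (A.biUnion (fun a => (range L).filter (fun j => j % d = a))).card := by
      rw [Finset.card_biUnion]
      · apply Finset.sum_le_sum
        intro a haA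
        rw [hA, Finset.mem_filter, Finset.mem_range] at haA
        exact count_class_ge L d a hd haA.1
      · intro a _ b _ hab
        apply Finset.disjoint_left.mpr
        intro j hj1 hj2
        rw [Finset.mem_filter] at hj1 hj2
        exact hab (hj1.2 ▸ hj2.2 ▸ rfl)
    have heq : ∑ _a ∈ A, L / d = t * (L/d) := by
      rw [Finset.sum_const, hAcard, smul_eq_mul]
    have := Finset.card_le_card hsub
    omega
  have up1 : ((range L).filter (fun j => Nat.Coprime ((j + s) % d) d)).card ≤
      ∑ p ∈ P', ((range L).filter (fun j => Nat.Coprime ((j+s)%d) d ∧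
        j % p = ((-(x+1)) % (p:ℤ)).toNat)).card := by
    refine le_trans (Finset.card_le_card ?_) Finset.card_biUnion_le
    intro j hj
    rw [Finset.mem_filter] at hj
    obtain ⟨p, hpP, hpdvd⟩ := hcov j hj.1 hj.2
    rw [Finset.mem_biUnion]
    refine ⟨p, hpP, ?_⟩
    rw [Finset.mem_filter]
    exact ⟨hj.1, hj.2, (dvd_iff_mod p (hprime p hpP).1.pos (x+1) j).mp hpdvd⟩
  have up2 : ∀ p ∈ P', ((range L).filter (fun j => Nat.Coprime ((j+s)%d) d ∧
      j % p = ((-(x+1)) % (p:ℤ)).toNat)).card ≤ t * ((L-1)/(d*p)+1) := by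
    intro p hpP
    obtain ⟨hp, hnd⟩ := hprime p hpP
    have hco : Nat.Coprime d p := ((Nat.Prime.coprime_iff_not_dvd hp).mpr hnd).symm
    set b := ((-(x+1)) % (p:ℤ)).toNat with hb
    have hsub : (range L).filter (fun j => Nat.Coprime ((j+s)%d) d ∧ j % p = b) ⊆
        A.biUnion (fun a => (range L).filter (fun j => j % d = a ∧ j % p = b)) := by
      intro j hj
      rw [Finset.mem_filter] at hj
      rw [Finset.mem_biUnion]
      refine ⟨j % d, ?_, ?_⟩
      · rw [hA, Finset.mem_filter, Finset.mem_range]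
        refine ⟨Nat.mod_lt _ hd, ?_⟩
        rw [← per j]
        exact hj.2.1
      · rw [Finset.mem_filter]
        exact ⟨hj.1, rfl, hj.2.2⟩
    have h1 := Finset.card_le_card hsub
    have h2 : (A.biUnion (fun a => (range L).filter (fun j => j % d = a ∧ j % p = b))).card
        ≤ ∑ a ∈ A, ((L-1)/(d*p)+1) := by
      refine le_trans Finset.card_biUnion_le (Finset.sum_le_sum ?_)
      intro a _
      exact count_pair L d p a b hd hp.pos hco
    have h3 : ∑ _a ∈ A, ((L-1)/(d*p)+1) = t * ((L-1)/(d*p)+1) := by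
      rw [Finset.sum_const, hAcard, smul_eq_mul]
    omega
  calc t * (L / d) ≤ _ := low
    _ ≤ _ := up1
    _ ≤ _ := Finset.sum_le_sum up2

lemma nth_sge (c v i : ℕ) (hv : sge c v) (hc : Nat.count (sge c) v = i) :
    Nat.nth (sge c) i = v := by
  rw [← hc]; exact Nat.nth_count hv

lemma count_sge (c v : ℕ) : Nat.count (sge c) v = ((range v).filter (fun x => Nat.Prime x ∧ c ≤ x)).card := by
  rw [Nat.count_eq_card_filter_range]; rfl

lemma nth5_0 : Nat.nth (sge 5) 0 = 5 := nth_sge 5 5 0 (by constructor <;> norm_num) (by rw [count_sge]; decide)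
lemma nth5_1 : Nat.nth (sge 5) 1 = 7 := nth_sge 5 7 1 (by constructor <;> norm_num) (by rw [count_sge]; decide)
lemma nth5_2 : Nat.nth (sge 5) 2 = 11 := nth_sge 5 11 2 (by constructor <;> norm_num) (by rw [count_sge]; decide)
lemma nth5_3 : Nat.nth (sge 5) 3 = 13 := nth_sge 5 13 3 (by constructor <;> norm_num) (by rw [count_sge]; decide)
lemma nth5_4 : Nat.nth (sge 5) 4 = 17 := nth_sge 5 17 4 (by constructor <;> norm_num) (by rw [count_sge]; decide)
lemma nth5_5 : Nat.nth (sge 5) 5 = 19 := nth_sge 5 19 5 (by constructor <;> norm_num) (by rw [count_sge]; decide)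
lemma nth5_6 : Nat.nth (sge 5) 6 = 23 := nth_sge 5 23 6 (by constructor <;> norm_num) (by rw [count_sge]; decide)
lemma nth5_7 : Nat.nth (sge 5) 7 = 29 := nth_sge 5 29 7 (by constructor <;> norm_num) (by rw [count_sge]; decide)
lemma nth5_8 : Nat.nth (sge 5) 8 = 31 := nth_sge 5 31 8 (by constructor <;> norm_num) (by rw [count_sge]; decide)
lemma nth5_9 : Nat.nth (sge 5) 9 = 37 := nth_sge 5 37 9 (by constructor <;> norm_num) (by rw [count_sge]; decide)
lemma nth3_0 : Nat.nth (sge 3) 0 = 3 := nth_sge 3 3 0 (by constructor <;> norm_num) (by rw [count_sge]; decide)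
lemma nth3_1 : Nat.nth (sge 3) 1 = 5 := nth_sge 3 5 1 (by constructor <;> norm_num) (by rw [count_sge]; decide)
lemma nth3_2 : Nat.nth (sge 3) 2 = 7 := nth_sge 3 7 2 (by constructor <;> norm_num) (by rw [count_sge]; decide)
lemma nth5_10 : Nat.nth (sge 5) 10 = 41 := nth_sge 5 41 10 (by constructor <;> norm_num) (by rw [count_sge]; decide)
lemma nth5_11 : Nat.nth (sge 5) 11 = 43 := nth_sge 5 43 11 (by constructor <;> norm_num) (by rw [count_sge]; decide)

lemma numTT6 (k : ℕ) (h5 : 5 ≤ k) (h12 : k ≤ 12) :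
    ¬ (2 * (k^2/6) ≤ ∑ i ∈ range (k-2), 2*((k^2-1)/(6 * Nat.nth (sge 5) i)+1)) := by
  interval_cases k <;>
    simp only [Finset.sum_range_succ, Finset.sum_range_zero, show (5:ℕ)-2=3 from rfl,
      show (6:ℕ)-2=4 from rfl, show (7:ℕ)-2=5 from rfl, show (8:ℕ)-2=6 from rfl,
      show (9:ℕ)-2=7 from rfl, show (10:ℕ)-2=8 from rfl, show (11:ℕ)-2=9 from rfl,
      show (12:ℕ)-2=10 from rfl, nth5_0, nth5_1, nth5_2, nth5_3, nth5_4, nth5_5,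
      nth5_6, nth5_7, nth5_8, nth5_9] <;> norm_num

lemma numTT2 (k : ℕ) (h2 : 2 ≤ k) (h4 : k ≤ 4) :
    ¬ (1 * (k^2/2) ≤ ∑ i ∈ range (k-1), 1*((k^2-1)/(2 * Nat.nth (sge 3) i)+1)) := by
  interval_cases k <;>
    simp only [Finset.sum_range_succ, Finset.sum_range_zero, show (2:ℕ)-1=1 from rfl,
      show (3:ℕ)-1=2 from rfl, show (4:ℕ)-1=3 from rfl,
      nth3_0, nth3_1, nth3_2] <;> norm_num

lemma numTF (k : ℕ) (h2 : 2 ≤ k) (h12 : k ≤ 12) :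
    ¬ (1 * (k^2/2) ≤ ∑ i ∈ range (k-1), 1*((k^2-1)/(2 * Nat.nth (sge 5) i)+1)) := by
  interval_cases k <;>
    simp only [Finset.sum_range_succ, Finset.sum_range_zero, show (2:ℕ)-1=1 from rfl,
      show (3:ℕ)-1=2 from rfl, show (4:ℕ)-1=3 from rfl, show (5:ℕ)-1=4 from rfl,
      show (6:ℕ)-1=5 from rfl, show (7:ℕ)-1=6 from rfl, show (8:ℕ)-1=7 from rfl,
      show (9:ℕ)-1=8 from rfl, show (10:ℕ)-1=9 from rfl, show (11:ℕ)-1=10 from rfl,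
      show (12:ℕ)-1=11 from rfl, nth5_0, nth5_1, nth5_2, nth5_3, nth5_4, nth5_5,
      nth5_6, nth5_7, nth5_8, nth5_9, nth5_10] <;> norm_num

lemma numFT3 (k : ℕ) (h3 : 3 ≤ k) (h12 : k ≤ 12) :
    ¬ (2 * (k^2/3) ≤ ∑ i ∈ range (k-1), 2*((k^2-1)/(3 * Nat.nth (sge 5) i)+1)) := by
  interval_cases k <;>
    simp only [Finset.sum_range_succ, Finset.sum_range_zero,
      show (3:ℕ)-1=2 from rfl, show (4:ℕ)-1=3 from rfl, show (5:ℕ)-1=4 from rfl,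
      show (6:ℕ)-1=5 from rfl, show (7:ℕ)-1=6 from rfl, show (8:ℕ)-1=7 from rfl,
      show (9:ℕ)-1=8 from rfl, show (10:ℕ)-1=9 from rfl, show (11:ℕ)-1=10 from rfl,
      show (12:ℕ)-1=11 from rfl, nth5_0, nth5_1, nth5_2, nth5_3, nth5_4, nth5_5,
      nth5_6, nth5_7, nth5_8, nth5_9, nth5_10] <;> norm_num

lemma numFT1 : ¬ (1 * (2^2/1) ≤ ∑ i ∈ range 2, 1*((2^2-1)/(1 * Nat.nth (sge 3) i)+1)) := by
  simp only [Finset.sum_range_succ, Finset.sum_range_zero, nth3_0, nth3_1] <;> norm_num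

lemma numFF (k : ℕ) (h2 : 2 ≤ k) (h12 : k ≤ 12) :
    ¬ (1 * (k^2/1) ≤ ∑ i ∈ range k, 1*((k^2-1)/(1 * Nat.nth (sge 5) i)+1)) := by
  interval_cases k <;>
    simp only [Finset.sum_range_succ, Finset.sum_range_zero,
      nth5_0, nth5_1, nth5_2, nth5_3, nth5_4, nth5_5,
      nth5_6, nth5_7, nth5_8, nth5_9, nth5_10, nth5_11] <;> norm_num

lemma f_anti (L d t : ℕ) (hd : 0 < d) :
    ∀ a b, 0 < a → a ≤ b → t*((L-1)/(d*b)+1) ≤ t*((L-1)/(d*a)+1) := by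
  intro a b ha hab
  have h1 : (L-1)/(d*b) ≤ (L-1)/(d*a) :=
    Nat.div_le_div_left (Nat.mul_le_mul_left d hab) (Nat.mul_pos hd ha)
  exact Nat.mul_le_mul_left t (by omega)

lemma prime_five_le (p : ℕ) (hp : p.Prime) (h2 : p ≠ 2) (h3 : p ≠ 3) : 5 ≤ p := by
  have := hp.two_le
  have h4 : p ≠ 4 := by rintro rfl; norm_num at hp
  omega

/-- If `2 ≤ ω(n) ≤ 12`, then for every integer `x`, among
`x + 1, …, x + ω(n)²` there is an integer coprime to `n`,
i.e. `g(n) ≤ ω(n)²` whenever `2 ≤ ω(n) ≤ 12`. -/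
theorem jacobsthal_le_omega_sq (n : ℕ) (hn : 0 < n)
    (h2 : 2 ≤ n.primeFactors.card) (h12 : n.primeFactors.card ≤ 12) (x : ℤ) :
    ∃ ν : ℤ, x + 1 ≤ ν ∧ ν ≤ x + n.primeFactors.card ^ 2 ∧
      Int.gcd ν (n : ℤ) = 1 := by
  by_contra hcon
  push_neg at hcon
  set P := n.primeFactors with hP
  set k := P.card with hk
  have hPprime : ∀ p ∈ P, p.Prime := fun p hp => Nat.prime_of_mem_primeFactors hp
  have H : ∀ j ∈ range (k^2), ∃ p ∈ P, (p:ℤ) ∣ (x + 1 + j) := by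
    intro j hj
    rw [Finset.mem_range] at hj
    have hb1 : x + 1 ≤ x + 1 + j := by
      have : (0:ℤ) ≤ j := Int.ofNat_nonneg j
      linarith
    have hb2 : x + 1 + j ≤ x + (k:ℤ)^2 := by
      have : (j:ℤ) < ((k:ℕ):ℤ)^2 := by exact_mod_cast hj
      linarith
    have hg : Int.gcd (x+1+j) n ≠ 1 := hcon (x+1+j) hb1 hb2
    obtain ⟨p, hpp, hpdvd⟩ := Nat.exists_prime_and_dvd hg
    have hpn : p ∣ n := by
      have h1 : (Int.gcd (x+1+j) (n:ℤ) : ℤ) ∣ (n:ℤ) := Int.gcd_dvd_right _ _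
      have : (p:ℤ) ∣ (n:ℤ) := dvd_trans (by exact_mod_cast hpdvd) h1
      exact_mod_cast this
    have hpv : (p:ℤ) ∣ (x+1+j) :=
      dvd_trans (by exact_mod_cast hpdvd) (Int.gcd_dvd_left _ _)
    exact ⟨p, Nat.mem_primeFactors.mpr ⟨hpp, hpn, hn.ne'⟩, hpv⟩
  by_cases h2P : 2 ∈ P <;> by_cases h3P : 3 ∈ P
  · -- 2 ∈ P, 3 ∈ P
    rcases le_or_gt k 4 with hk4 | hk5
    · -- d = 2
      have hP' : ∀ p ∈ P.erase 2, p.Prime ∧ ¬ p ∣ 2 := by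
        intro p hp
        rw [Finset.mem_erase] at hp
        have hpp := hPprime p hp.2
        refine ⟨hpp, fun hdvd => ?_⟩
        have := Nat.le_of_dvd (by norm_num) hdvd
        have := hpp.two_le
        exact hp.1 (by omega)
      have hcov : ∀ j ∈ range (k^2),
          Nat.Coprime ((j + ((x+1) % (((2:ℕ)):ℤ)).toNat) % 2) 2 →
          ∃ p ∈ P.erase 2, (p:ℤ) ∣ (x + 1 + j) := by
        intro j hj hgood
        obtain ⟨p, hpP, hpd⟩ := H j hj
        refine ⟨p, Finset.mem_erase.mpr ⟨?_, hpP⟩, hpd⟩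
        rintro rfl
        exact not_good_of_dvd 2 2 (by norm_num) x j dvd_rfl le_rfl hpd hgood
      have key := sieve (k^2) 2 1 (by norm_num) x (P.erase 2) hP' (by decide) hcov
      have hcard : (P.erase 2).card = k - 1 := by
        rw [Finset.card_erase_of_mem h2P]
      have hmem : ∀ p ∈ P.erase 2, sge 3 p := by
        intro p hp
        rw [Finset.mem_erase] at hp
        have hpp := hPprime p hp.2
        have := hpp.two_le
        exact ⟨hpp, by omega⟩
      have dom := sum_le_sum_nth (fun p => 1*((k^2-1)/(2*p)+1)) (sge 3)
        (sge_infinite 3) (fun p hp => by have := hp.1.two_le; omega)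
        (f_anti (k^2) 2 1 (by norm_num)) (k-1) (P.erase 2) hcard hmem
      exact numTT2 k h2 hk4 (le_trans key dom)
    · -- d = 6
      have h3P' : 3 ∈ P.erase 2 := Finset.mem_erase.mpr ⟨by norm_num, h3P⟩
      have hP' : ∀ p ∈ (P.erase 2).erase 3, p.Prime ∧ ¬ p ∣ 6 := by
        intro p hp
        rw [Finset.mem_erase, Finset.mem_erase] at hp
        have hpp := hPprime p hp.2.2
        refine ⟨hpp, fun hdvd => ?_⟩
        have h6 := Nat.le_of_dvd (by norm_num) hdvd
        have := hpp.two_le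
        have h4 : p ≠ 4 := by rintro rfl; norm_num at hdvd
        have h5 : p ≠ 5 := by rintro rfl; norm_num at hdvd
        have h6' : p ≠ 6 := by rintro rfl; norm_num at hpp
        have := hp.1; have := hp.2.1
        omega
      have hcov : ∀ j ∈ range (k^2),
          Nat.Coprime ((j + ((x+1) % (((6:ℕ)):ℤ)).toNat) % 6) 6 →
          ∃ p ∈ (P.erase 2).erase 3, (p:ℤ) ∣ (x + 1 + j) := by
        intro j hj hgood
        obtain ⟨p, hpP, hpd⟩ := H j hj
        have hp2 : p ≠ 2 := by
          rintro rfl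
          exact not_good_of_dvd 6 2 (by norm_num) x j (by norm_num) le_rfl hpd hgood
        have hp3 : p ≠ 3 := by
          rintro rfl
          exact not_good_of_dvd 6 3 (by norm_num) x j (by norm_num) (by norm_num) hpd hgood
        exact ⟨p, Finset.mem_erase.mpr ⟨hp3, Finset.mem_erase.mpr ⟨hp2, hpP⟩⟩, hpd⟩
      have key := sieve (k^2) 6 2 (by norm_num) x ((P.erase 2).erase 3) hP' (by decide) hcov
      have hcard : ((P.erase 2).erase 3).card = k - 2 := by
        rw [Finset.card_erase_of_mem h3P', Finset.card_erase_of_mem h2P]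
        omega
      have hmem : ∀ p ∈ (P.erase 2).erase 3, sge 5 p := by
        intro p hp
        rw [Finset.mem_erase, Finset.mem_erase] at hp
        have hpp := hPprime p hp.2.2
        exact ⟨hpp, prime_five_le p hpp hp.2.1 hp.1⟩
      have dom := sum_le_sum_nth (fun p => 2*((k^2-1)/(6*p)+1)) (sge 5)
        (sge_infinite 5) (fun p hp => by have := hp.1.two_le; omega)
        (f_anti (k^2) 6 2 (by norm_num)) (k-2) ((P.erase 2).erase 3) hcard hmem
      exact numTT6 k hk5 h12 (le_trans key dom)
  · -- 2 ∈ P, 3 ∉ P : d = 2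
    have hP' : ∀ p ∈ P.erase 2, p.Prime ∧ ¬ p ∣ 2 := by
      intro p hp
      rw [Finset.mem_erase] at hp
      have hpp := hPprime p hp.2
      refine ⟨hpp, fun hdvd => ?_⟩
      have := Nat.le_of_dvd (by norm_num) hdvd
      have := hpp.two_le
      exact hp.1 (by omega)
    have hcov : ∀ j ∈ range (k^2),
        Nat.Coprime ((j + ((x+1) % (((2:ℕ)):ℤ)).toNat) % 2) 2 →
        ∃ p ∈ P.erase 2, (p:ℤ) ∣ (x + 1 + j) := by
      intro j hj hgood
      obtain ⟨p, hpP, hpd⟩ := H j hj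
      refine ⟨p, Finset.mem_erase.mpr ⟨?_, hpP⟩, hpd⟩
      rintro rfl
      exact not_good_of_dvd 2 2 (by norm_num) x j dvd_rfl le_rfl hpd hgood
    have key := sieve (k^2) 2 1 (by norm_num) x (P.erase 2) hP' (by decide) hcov
    have hcard : (P.erase 2).card = k - 1 := by
      rw [Finset.card_erase_of_mem h2P]
    have hmem : ∀ p ∈ P.erase 2, sge 5 p := by
      intro p hp
      rw [Finset.mem_erase] at hp
      have hpp := hPprime p hp.2
      have hp3 : p ≠ 3 := fun h => h3P (h ▸ hp.2)
      exact ⟨hpp, prime_five_le p hpp hp.1 hp3⟩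
    have dom := sum_le_sum_nth (fun p => 1*((k^2-1)/(2*p)+1)) (sge 5)
      (sge_infinite 5) (fun p hp => by have := hp.1.two_le; omega)
      (f_anti (k^2) 2 1 (by norm_num)) (k-1) (P.erase 2) hcard hmem
    exact numTF k h2 h12 (le_trans key dom)
  · -- 2 ∉ P, 3 ∈ P
    rcases le_or_gt k 2 with hk2 | hk3
    · -- k = 2, d = 1
      have hk2' : k = 2 := le_antisymm hk2 h2
      have hP' : ∀ p ∈ P, p.Prime ∧ ¬ p ∣ 1 := by
        intro p hp
        have hpp := hPprime p hp
        exact ⟨hpp, fun hdvd => by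
          have := Nat.dvd_one.mp hdvd
          have := hpp.two_le
          omega⟩
      have hcov : ∀ j ∈ range (k^2),
          Nat.Coprime ((j + ((x+1) % (((1:ℕ)):ℤ)).toNat) % 1) 1 →
          ∃ p ∈ P, (p:ℤ) ∣ (x + 1 + j) := by
        intro j hj _
        exact H j hj
      have key := sieve (k^2) 1 1 (by norm_num) x P hP' (by decide) hcov
      have hmem : ∀ p ∈ P, sge 3 p := by
        intro p hp
        have hpp := hPprime p hp
        have := hpp.two_le
        have hp2 : p ≠ 2 := fun h => h2P (h ▸ hp)
        exact ⟨hpp, by omega⟩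
      have dom := sum_le_sum_nth (fun p => 1*((k^2-1)/(1*p)+1)) (sge 3)
        (sge_infinite 3) (fun p hp => by have := hp.1.two_le; omega)
        (f_anti (k^2) 1 1 (by norm_num)) k P hk.symm hmem
      rw [hk2'] at key dom
      exact numFT1 (le_trans key dom)
    · -- d = 3
      have hP' : ∀ p ∈ P.erase 3, p.Prime ∧ ¬ p ∣ 3 := by
        intro p hp
        rw [Finset.mem_erase] at hp
        have hpp := hPprime p hp.2
        refine ⟨hpp, fun hdvd => ?_⟩
        exact hp.1 ((Nat.prime_dvd_prime_iff_eq hpp (by norm_num)).mp hdvd)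
      have hcov : ∀ j ∈ range (k^2),
          Nat.Coprime ((j + ((x+1) % (((3:ℕ)):ℤ)).toNat) % 3) 3 →
          ∃ p ∈ P.erase 3, (p:ℤ) ∣ (x + 1 + j) := by
        intro j hj hgood
        obtain ⟨p, hpP, hpd⟩ := H j hj
        refine ⟨p, Finset.mem_erase.mpr ⟨?_, hpP⟩, hpd⟩
        rintro rfl
        exact not_good_of_dvd 3 3 (by norm_num) x j dvd_rfl (by norm_num) hpd hgood
      have key := sieve (k^2) 3 2 (by norm_num) x (P.erase 3) hP' (by decide) hcov
      have hcard : (P.erase 3).card = k - 1 := by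
        rw [Finset.card_erase_of_mem h3P]
      have hmem : ∀ p ∈ P.erase 3, sge 5 p := by
        intro p hp
        rw [Finset.mem_erase] at hp
        have hpp := hPprime p hp.2
        have hp2 : p ≠ 2 := fun h => h2P (h ▸ hp.2)
        exact ⟨hpp, prime_five_le p hpp hp2 hp.1⟩
      have dom := sum_le_sum_nth (fun p => 2*((k^2-1)/(3*p)+1)) (sge 5)
        (sge_infinite 5) (fun p hp => by have := hp.1.two_le; omega)
        (f_anti (k^2) 3 2 (by norm_num)) (k-1) (P.erase 3) hcard hmem
      exact numFT3 k hk3 h12 (le_trans key dom)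
  · -- 2 ∉ P, 3 ∉ P : d = 1
    have hP' : ∀ p ∈ P, p.Prime ∧ ¬ p ∣ 1 := by
      intro p hp
      have hpp := hPprime p hp
      exact ⟨hpp, fun hdvd => by
        have := Nat.dvd_one.mp hdvd
        have := hpp.two_le
        omega⟩
    have hcov : ∀ j ∈ range (k^2),
        Nat.Coprime ((j + ((x+1) % (((1:ℕ)):ℤ)).toNat) % 1) 1 →
        ∃ p ∈ P, (p:ℤ) ∣ (x + 1 + j) := by
      intro j hj _
      exact H j hj
    have key := sieve (k^2) 1 1 (by norm_num) x P hP' (by decide) hcov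
    have hmem : ∀ p ∈ P, sge 5 p := by
      intro p hp
      have hpp := hPprime p hp
      have hp2 : p ≠ 2 := fun h => h2P (h ▸ hp)
      have hp3 : p ≠ 3 := fun h => h3P (h ▸ hp)
      exact ⟨hpp, prime_five_le p hpp hp2 hp3⟩
    have dom := sum_le_sum_nth (fun p => 1*((k^2-1)/(1*p)+1)) (sge 5)
      (sge_infinite 5) (fun p hp => by have := hp.1.two_le; omega)
      (f_anti (k^2) 1 1 (by norm_num)) k P hk.symm hmem
    exact numFF k h2 h12 (le_trans key dom)
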